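/- Existence and uniqueness of the cusp parameters (part of Theorem 1.4 of the paper): For all real numbers α < β, there exists exactly one pair (x, σ) ∈ ℝ² with 3/2 < x < 2, −1/2 < σ < 0, 4·σ⁶·x⁴ − 2x + 3 = 0, and β − α = 4·σ⁴·x³/(2 − x). Likewise, there exists exactly one pair (x, σ) ∈ ℝ² with 3/2 < x < 2, 0 < σ < 1/2 satisfying the same two equations. -/

import Mathlib

open Set

private lemma cusp_G_anti (c : ℝ) (hc : 0 < c) {x y : ℝ} (hx : 3/2 ≤ x) (hxy : x < y)
    (hy : y ≤ 2) :
    c^3*(2-y)^3 - 4*y*(2*y-3)^2 < c^3*(2-x)^3 - 4*x*(2*x-3)^2 := by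
  have hc3 : 0 < c^3 := pow_pos hc 3
  have h1 : (0:ℝ) < 2 - x := by linarith
  have h2 : (0:ℝ) ≤ 2 - y := by linarith
  have h3 : (0:ℝ) ≤ 2*x - 3 := by linarith
  have h4 : (0:ℝ) < y - x := by linarith
  have key1 : (2-y)^3 < (2-x)^3 :=
    pow_lt_pow_left₀ (by linarith) h2 (by norm_num)
  have key2 : 4*x*(2*x-3)^2 ≤ 4*y*(2*y-3)^2 := by
    nlinarith [mul_nonneg h4.le (sq_nonneg (2*y-3)),
      mul_nonneg (mul_nonneg (by linarith : (0:ℝ) ≤ x) h4.le)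
        (by linarith : (0:ℝ) ≤ 2*y+2*x-6)]
  nlinarith [mul_lt_mul_of_pos_left key1 hc3]

private lemma cusp_key (c : ℝ) (hc : 0 < c) :
    ∃! p : ℝ × ℝ, 3 / 2 < p.1 ∧ p.1 < 2 ∧ 0 < p.2 ∧ p.2 < 1 / 2 ∧
      4 * p.2 ^ 6 * p.1 ^ 4 - 2 * p.1 + 3 = 0 ∧
      c = 4 * p.2 ^ 4 * p.1 ^ 3 / (2 - p.1) := by
  set G : ℝ → ℝ := fun x => c^3*(2-x)^3 - 4*x*(2*x-3)^2 with hGdef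
  have hcont : ContinuousOn G (Icc (3/2) 2) := by
    apply Continuous.continuousOn; fun_prop
  have hGa : G (3/2) = c^3/8 := by simp only [hGdef]; ring
  have hGb : G 2 = -8 := by norm_num [hGdef]
  have h0 : (0:ℝ) ∈ Ioo (G 2) (G (3/2)) := by
    rw [hGa, hGb]; constructor <;> [norm_num; positivity]
  obtain ⟨x, hxmem, hGx⟩ := intermediate_value_Ioo' (by norm_num : (3:ℝ)/2 ≤ 2) hcont h0
  obtain ⟨hx1, hx2⟩ := hxmem
  have hx0 : (0:ℝ) < x := by linarith
  have h2x : (0:ℝ) < 2 - x := by linarith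
  have h2x3 : (0:ℝ) < 2*x - 3 := by linarith
  have hGx' : c^3*(2-x)^3 - 4*x*(2*x-3)^2 = 0 := hGx
  set A : ℝ := (2*x-3)/(c*x*(2-x)) with hAdef
  have hA : 0 < A := div_pos h2x3 (by positivity)
  set σ : ℝ := Real.sqrt A with hσdef
  have hσpos : 0 < σ := Real.sqrt_pos.mpr hA
  have hσ2 : σ^2 = A := Real.sq_sqrt hA.le
  have h6 : σ^6 = (2*x-3)/(4*x^4) := by
    have e : σ^6 = A^3 := by rw [← hσ2]; ring
    rw [e, hAdef]
    rw [div_pow, div_eq_div_iff (by positivity) (by positivity)]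
    linear_combination (-(2*x-3)*x^3) * hGx'
  have hE1 : 4 * σ^6 * x^4 - 2*x + 3 = 0 := by
    rw [h6]; field_simp; ring
  have hE2 : c = 4 * σ^4 * x^3 / (2 - x) := by
    have e : σ^4 = A^2 := by rw [← hσ2]; ring
    rw [eq_div_iff (by linarith : (2:ℝ) - x ≠ 0), e, hAdef, div_pow]
    field_simp
    linear_combination hGx'
  have hσhalf : σ < 1/2 := by
    have hlt : σ^6 < 1/64 := by
      rw [h6, div_lt_div_iff₀ (by positivity) (by norm_num)]
      nlinarith [mul_pos h2x (show (0:ℝ) < 24 - x^3 - 2*x^2 - 4*x by nlinarith)]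
    by_contra h
    push_neg at h
    have : (1/2:ℝ)^6 ≤ σ^6 := pow_le_pow_left₀ (by norm_num) h 6
    norm_num at this
    linarith
  refine ⟨(x, σ), ⟨hx1, hx2, hσpos, hσhalf, hE1, hE2⟩, ?_⟩
  rintro ⟨y, τ⟩ ⟨hy1, hy2, hτ1, hτ2, hq5, hq6⟩
  simp only at hy1 hy2 hτ1 hτ2 hq5 hq6
  have h2y : (0:ℝ) < 2 - y := by linarith
  have e1 : 2*y - 3 = 4*τ^6*y^4 := by linarith
  have e2 : c*(2-y) = 4*τ^4*y^3 := by
    rw [hq6, div_mul_cancel₀]; linarith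
  have hGy : G y = 0 := by
    show c^3*(2-y)^3 - 4*y*(2*y-3)^2 = 0
    linear_combination ((c*(2-y))^2 + (c*(2-y))*(4*τ^4*y^3) + (4*τ^4*y^3)^2) * e2
      - 4*y*((2*y-3) + 4*τ^6*y^4) * e1
  have hyx : y = x := by
    rcases lt_trichotomy y x with h | h | h
    · exfalso
      have := cusp_G_anti c hc (le_of_lt hy1) h (le_of_lt hx2)
      rw [show c^3*(2-x)^3 - 4*x*(2*x-3)^2 = G x from rfl,
        show c^3*(2-y)^3 - 4*y*(2*y-3)^2 = G y from rfl, hGx, hGy] at this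
      exact lt_irrefl 0 this
    · exact h
    · exfalso
      have := cusp_G_anti c hc (le_of_lt hx1) h (le_of_lt hy2)
      rw [show c^3*(2-x)^3 - 4*x*(2*x-3)^2 = G x from rfl,
        show c^3*(2-y)^3 - 4*y*(2*y-3)^2 = G y from rfl, hGx, hGy] at this
      exact lt_irrefl 0 this
  have hτ6 : τ^6 = σ^6 := by
    subst hyx
    have : 4*τ^6*y^4 = 2*y - 3 := by linarith
    have hy4 : (0:ℝ) < y^4 := by positivity
    rw [h6]
    rw [eq_div_iff (by positivity)]
    linarith [this]
  have hτσ : τ = σ := by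
    rcases lt_trichotomy τ σ with h | h | h
    · exfalso
      have := pow_lt_pow_left₀ h hτ1.le (show 6 ≠ 0 by norm_num)
      rw [hτ6] at this; exact lt_irrefl _ this
    · exact h
    · exfalso
      have := pow_lt_pow_left₀ h hσpos.le (show 6 ≠ 0 by norm_num)
      rw [hτ6] at this; exact lt_irrefl _ this
  exact Prod.ext hyx hτσ

theorem cusp_parameters_exist_unique (α β : ℝ) (hαβ : α < β) :
    (∃! p : ℝ × ℝ,
        3 / 2 < p.1 ∧ p.1 < 2 ∧ -(1 / 2) < p.2 ∧ p.2 < 0 ∧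
          4 * p.2 ^ 6 * p.1 ^ 4 - 2 * p.1 + 3 = 0 ∧
          β - α = 4 * p.2 ^ 4 * p.1 ^ 3 / (2 - p.1)) ∧
      ∃! p : ℝ × ℝ,
        3 / 2 < p.1 ∧ p.1 < 2 ∧ 0 < p.2 ∧ p.2 < 1 / 2 ∧
          4 * p.2 ^ 6 * p.1 ^ 4 - 2 * p.1 + 3 = 0 ∧
          β - α = 4 * p.2 ^ 4 * p.1 ^ 3 / (2 - p.1) := by
  have hc : 0 < β - α := sub_pos.mpr hαβ
  obtain ⟨⟨x, σ⟩, ⟨hx1, hx2, hσ1, hσ2, hE1, hE2⟩, huniq⟩ := cusp_key (β - α) hc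
  simp only at hx1 hx2 hσ1 hσ2 hE1 hE2
  constructor
  · refine ⟨(x, -σ), ⟨hx1, hx2, by simpa using neg_lt_neg hσ2, by simpa using hσ1, ?_, ?_⟩, ?_⟩
    · show 4 * (-σ)^6 * x^4 - 2*x + 3 = 0
      rw [show (-σ)^6 = σ^6 by ring]; exact hE1
    · show β - α = 4 * (-σ)^4 * x^3 / (2 - x)
      rw [show (-σ)^4 = σ^4 by ring]; exact hE2
    · rintro ⟨y, τ⟩ ⟨hy1, hy2, hτ1, hτ2, hq5, hq6⟩
      simp only at hy1 hy2 hτ1 hτ2 hq5 hq6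
      have h := huniq (y, -τ) ⟨hy1, hy2, by simpa using hτ2, by simpa using neg_lt_neg hτ1,
        by rw [show (-τ)^6 = τ^6 by ring]; exact hq5,
        by rw [show (-τ)^4 = τ^4 by ring]; exact hq6⟩
      have h1 : y = x := congrArg Prod.fst h
      have h2 : -τ = σ := congrArg Prod.snd h
      exact Prod.ext h1 (by linarith [h2.symm ▸ (rfl : σ = σ)] : τ = -σ)
  · exact ⟨(x, σ), ⟨hx1, hx2, hσ1, hσ2, hE1, hE2⟩, huniq⟩
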